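/- Z₂ order–disorder inequality: let ρ be a density matrix on a finite-dimensional complex space, let U be a Hermitian unitary matrix (U = U†, U² = 1), and let O be a unitary matrix anticommuting with U in the sense U O U† = −O. Then F(ρ, O ρ O†)² + |tr(ρ U)|² ≤ 1. -/

import Mathlib

noncomputable section

open scoped Matrix Kronecker ComplexOrder

/-- The positive semidefinite square root of a matrix (defaults to `0` if not PSD). -/
noncomputable def matSqrt {n : Type*} [Fintype n] [DecidableEq n] (M : Matrix n n ℂ) :
    Matrix n n ℂ :=
  open scoped Classical in
  if h : M.PosSemidef then
    h.1.eigenvectorUnitary.1 * Matrix.diagonal ((↑) ∘ (Real.sqrt ∘ h.1.eigenvalues)) *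
      (star h.1.eigenvectorUnitary : Matrix n n ℂ)
  else 0

/-- The fidelity `F(ρ, σ) = tr √(√ρ σ √ρ)` of two PSD matrices. -/
noncomputable def fidelity {n : Type*} [Fintype n] [DecidableEq n] (ρ σ : Matrix n n ℂ) : ℝ :=
  (matSqrt (matSqrt ρ * σ * matSqrt ρ)).trace.re

/-- The ℓ²→ℓ² operator norm of a complex matrix. -/
noncomputable def opNorm {m n : Type*} [Fintype m] [Fintype n] [DecidableEq n]
    (M : Matrix m n ℂ) : ℝ :=
  ‖(Matrix.toEuclideanLin.trans LinearMap.toContinuousLinearMap) M‖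

/-- Partial trace over the second tensor factor. -/
noncomputable def ptraceB {A B : Type*} [Fintype B]
    (ρ : Matrix (A × B) (A × B) ℂ) : Matrix A A ℂ :=
  Matrix.of fun a a' => ∑ b : B, ρ (a, b) (a', b)

noncomputable def Matrix.PosSemidef.sqrt {n : Type*} [Fintype n] [DecidableEq n]
    {M : Matrix n n ℂ} (h : M.PosSemidef) : Matrix n n ℂ :=
  h.1.eigenvectorUnitary.1 * Matrix.diagonal ((↑) ∘ (Real.sqrt ∘ h.1.eigenvalues)) *
    (star h.1.eigenvectorUnitary : Matrix n n ℂ)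

lemma Matrix.PosSemidef.posSemidef_sqrt {n : Type*} [Fintype n] [DecidableEq n]
    {M : Matrix n n ℂ} (h : M.PosSemidef) : h.sqrt.PosSemidef := by
  unfold Matrix.PosSemidef.sqrt
  have hd : (Matrix.diagonal ((↑) ∘ (Real.sqrt ∘ h.1.eigenvalues)) : Matrix n n ℂ).PosSemidef :=
    Matrix.posSemidef_diagonal_iff.mpr fun i => by
      simp only [Function.comp_apply]
      exact Complex.zero_le_real.mpr (Real.sqrt_nonneg _)
  have := hd.mul_mul_conjTranspose_same h.1.eigenvectorUnitary.1
  rwa [← Matrix.star_eq_conjTranspose] at this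

lemma Matrix.PosSemidef.sqrt_mul_self {n : Type*} [Fintype n] [DecidableEq n]
    {M : Matrix n n ℂ} (h : M.PosSemidef) : h.sqrt * h.sqrt = M := by
  unfold Matrix.PosSemidef.sqrt
  set W := h.1.eigenvectorUnitary
  conv_rhs => rw [h.1.spectral_theorem, Unitary.conjStarAlgAut_apply]
  have hWW : (star W : Matrix n n ℂ) * W = 1 := Unitary.coe_star_mul_self W
  set D : Matrix n n ℂ := Matrix.diagonal ((↑) ∘ (Real.sqrt ∘ h.1.eigenvalues)) with hD
  calc (W : Matrix n n ℂ) * D * (star W : Matrix n n ℂ) * ((W : Matrix n n ℂ) * D * (star W : Matrix n n ℂ))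
      = (W : Matrix n n ℂ) * (D * ((star W : Matrix n n ℂ) * W) * D) * (star W : Matrix n n ℂ) := by
        simp only [Matrix.mul_assoc]
    _ = _ := by
      rw [hWW, Matrix.mul_one, hD, Matrix.diagonal_mul_diagonal]
      congr 3
      funext i
      simp only [Function.comp_apply]
      rw [← Complex.ofReal_mul, Real.mul_self_sqrt (h.eigenvalues_nonneg i)]
      rfl

namespace Z2Aux

open Matrix

variable {n : Type*} [Fintype n] [DecidableEq n]

lemma trace_ctms (X : Matrix n n ℂ) :
    (Xᴴ * X).trace = ((∑ j, ∑ i, Complex.normSq (X i j) : ℝ) : ℂ) := by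
  simp only [Matrix.trace, Matrix.diag, Matrix.mul_apply, Matrix.conjTranspose_apply]
  push_cast
  exact Finset.sum_congr rfl fun j _ => Finset.sum_congr rfl fun i _ =>
    Complex.normSq_eq_conj_mul_self.symm

lemma trace_ctms_re_nonneg (X : Matrix n n ℂ) : 0 ≤ (Xᴴ * X).trace.re := by
  rw [trace_ctms]
  simp only [Complex.ofReal_re]
  exact Finset.sum_nonneg fun j _ => Finset.sum_nonneg fun i _ => Complex.normSq_nonneg _

lemma psd_trace_ofReal {M : Matrix n n ℂ} (hM : M.PosSemidef) :
    M.trace = (M.trace.re : ℂ) := by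
  have h1 : M = hM.sqrtᴴ * hM.sqrt := by
    conv_lhs => rw [← hM.sqrt_mul_self]
    rw [hM.posSemidef_sqrt.1]
  rw [h1, trace_ctms]
  simp

lemma psd_trace_re_nonneg {M : Matrix n n ℂ} (hM : M.PosSemidef) : 0 ≤ M.trace.re := by
  have h1 : M = hM.sqrtᴴ * hM.sqrt := by
    conv_lhs => rw [← hM.sqrt_mul_self]
    rw [hM.posSemidef_sqrt.1]
  rw [h1]
  exact trace_ctms_re_nonneg _

lemma psd_mul_trace_re_nonneg {S T : Matrix n n ℂ} (hS : S.PosSemidef) (hT : T.PosSemidef) :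
    0 ≤ (S * T).trace.re := by
  have h := hT.mul_mul_conjTranspose_same hS.sqrt
  rw [hS.posSemidef_sqrt.1] at h
  have e : (S * T).trace = (hS.sqrt * T * hS.sqrt).trace := by
    conv_lhs => rw [← hS.sqrt_mul_self]
    rw [Matrix.mul_assoc, Matrix.trace_mul_comm]
  rw [e]
  exact psd_trace_re_nonneg h

/-- Cauchy–Schwarz for the trace inner product. -/
lemma trace_cs (X Y : Matrix n n ℂ) :
    ‖(Xᴴ * Y).trace‖ ≤
      Real.sqrt ((Xᴴ * X).trace.re) * Real.sqrt ((Yᴴ * Y).trace.re) := by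
  classical
  let v : Matrix n n ℂ → EuclideanSpace ℂ (n × n) := fun M => WithLp.toLp 2 (fun p : n × n => M p.1 p.2)
  have hinner : ∀ M N : Matrix n n ℂ, (inner ℂ (v M) (v N) : ℂ) = (Mᴴ * N).trace := by
    intro M N
    simp only [PiLp.inner_apply, RCLike.inner_apply, v, PiLp.toLp_apply, Matrix.trace, Matrix.diag,
      Matrix.mul_apply, Matrix.conjTranspose_apply]
    rw [Fintype.sum_prod_type, Finset.sum_comm]
    exact Finset.sum_congr rfl fun _ _ => Finset.sum_congr rfl fun _ _ => mul_comm _ _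
  have hnorm : ∀ M : Matrix n n ℂ, ‖v M‖ = Real.sqrt ((Mᴴ * M).trace.re) := by
    intro M
    rw [EuclideanSpace.norm_eq, trace_ctms]
    simp only [Complex.ofReal_re]
    congr 1
    rw [Fintype.sum_prod_type, Finset.sum_comm]
    refine Finset.sum_congr rfl fun j _ => Finset.sum_congr rfl fun i _ => ?_
    simp [v, Complex.sq_norm]
  calc ‖(Xᴴ * Y).trace‖ = ‖(inner ℂ (v X) (v Y) : ℂ)‖ := by
        rw [hinner]
    _ ≤ ‖v X‖ * ‖v Y‖ := norm_inner_le_norm _ _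
    _ = _ := by rw [hnorm, hnorm]

/-- Key contraction bound: if `1 - KᴴK ⪰ 0` then `Re tr(K B C) ≤ ‖B‖₂ ‖C‖₂`. -/
lemma key_bound (K B C : Matrix n n ℂ) (hK : ((1 : Matrix n n ℂ) - Kᴴ * K).PosSemidef) :
    ((K * (B * C)).trace).re ≤
      Real.sqrt ((B * Bᴴ).trace.re) * Real.sqrt ((Cᴴ * C).trace.re) := by
  have h1 : (K * (B * C)).trace = ((Bᴴ * Kᴴ)ᴴ * C).trace := by
    rw [Matrix.conjTranspose_mul, Matrix.conjTranspose_conjTranspose,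
      Matrix.conjTranspose_conjTranspose, ← Matrix.mul_assoc]
  have hcy : (K * B * Bᴴ * Kᴴ).trace = (B * Bᴴ * (Kᴴ * K)).trace := by
    rw [Matrix.trace_mul_cycle (K * B) Bᴴ Kᴴ, Matrix.trace_mul_cycle B Bᴴ (Kᴴ * K)]
    simp only [Matrix.mul_assoc]
  have h3 : ((Bᴴ * Kᴴ)ᴴ * (Bᴴ * Kᴴ)).trace.re ≤ (B * Bᴴ).trace.re := by
    have e : (B * Bᴴ).trace
        = ((Bᴴ * Kᴴ)ᴴ * (Bᴴ * Kᴴ)).trace + ((B * Bᴴ) * (1 - Kᴴ * K)).trace := by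
      rw [Matrix.conjTranspose_mul, Matrix.conjTranspose_conjTranspose,
        Matrix.conjTranspose_conjTranspose, Matrix.mul_sub, Matrix.mul_one, Matrix.trace_sub,
        ← Matrix.mul_assoc, hcy]
      ring
    have hnn := psd_mul_trace_re_nonneg (Matrix.posSemidef_self_mul_conjTranspose B) hK
    have := congrArg Complex.re e
    simp only [Complex.add_re] at this
    linarith
  calc ((K * (B * C)).trace).re = (((Bᴴ * Kᴴ)ᴴ * C).trace).re := by rw [h1]
    _ ≤ ‖((Bᴴ * Kᴴ)ᴴ * C).trace‖ := Complex.re_le_norm _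
    _ ≤ Real.sqrt (((Bᴴ * Kᴴ)ᴴ * (Bᴴ * Kᴴ)).trace.re) * Real.sqrt ((Cᴴ * C).trace.re) :=
        trace_cs _ _
    _ ≤ _ := by
        have := Real.sqrt_le_sqrt h3
        exact mul_le_mul_of_nonneg_right this (Real.sqrt_nonneg _)


/-- Polar-type contraction: there is `K` with `KᴴK ≤ 1` and `tr √(AAᴴ) = Re tr(K A)`. -/
lemma exists_contraction (A : Matrix n n ℂ) :
    ∃ K : Matrix n n ℂ, ((1 : Matrix n n ℂ) - Kᴴ * K).PosSemidef ∧
      (matSqrt (A * Aᴴ)).trace.re = ((K * A).trace).re := by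
  classical
  have hAA : (A * Aᴴ).PosSemidef := Matrix.posSemidef_self_mul_conjTranspose A
  set W : Matrix n n ℂ := (hAA.1.eigenvectorUnitary : Matrix n n ℂ) with hW
  set lam : n → ℝ := hAA.1.eigenvalues with hlam
  have hlam0 : ∀ i, 0 ≤ lam i := hAA.eigenvalues_nonneg
  have hWW : W * Wᴴ = 1 := by
    have := Matrix.mem_unitaryGroup_iff.mp hAA.1.eigenvectorUnitary.2
    rwa [Matrix.star_eq_conjTranspose] at this
  have hWW' : Wᴴ * W = 1 := by
    have := Matrix.mem_unitaryGroup_iff'.mp hAA.1.eigenvectorUnitary.2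
    rwa [Matrix.star_eq_conjTranspose] at this
  have hdiag : Wᴴ * A * Aᴴ * W = Matrix.diagonal (fun i => (lam i : ℂ)) := by
    have h := hAA.1.conjStarAlgAut_star_eigenvectorUnitary
    simp only [Unitary.conjStarAlgAut_apply, star_star, Unitary.coe_star,
      Matrix.star_eq_conjTranspose, Matrix.conjTranspose_conjTranspose] at h
    have h2 : (RCLike.ofReal ∘ lam : n → ℂ) = fun i => (lam i : ℂ) := rfl
    rw [h2] at h
    rw [← h]
    simp only [Matrix.mul_assoc]
    rfl
  set g : n → ℂ := fun i => if lam i = 0 then 0 else (((Real.sqrt (lam i))⁻¹ : ℝ) : ℂ) with hg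
  set K : Matrix n n ℂ := Aᴴ * W * Matrix.diagonal g * Wᴴ with hK
  have hsq : matSqrt (A * Aᴴ) = W * Matrix.diagonal (fun i => ((Real.sqrt (lam i) : ℝ) : ℂ)) * Wᴴ := by
    rw [matSqrt, dif_pos hAA]
    rfl
  have htr : (matSqrt (A * Aᴴ)).trace = ((∑ i, Real.sqrt (lam i) : ℝ) : ℂ) := by
    rw [hsq, Matrix.trace_mul_cycle, hWW', Matrix.one_mul, Matrix.trace_diagonal]
    push_cast
    rfl
  have htrKA : ((K * A).trace) = ((∑ i, Real.sqrt (lam i) : ℝ) : ℂ) := by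
    have e0 : K * A = Aᴴ * (W * Matrix.diagonal g * Wᴴ * A) := by
      rw [hK]; simp only [Matrix.mul_assoc]
    rw [e0, Matrix.trace_mul_comm]
    have e2 : W * Matrix.diagonal g * Wᴴ * A * Aᴴ = W * (Matrix.diagonal g * (Wᴴ * A * Aᴴ)) := by
      simp only [Matrix.mul_assoc]
    rw [e2, Matrix.trace_mul_comm]
    have e3 : Matrix.diagonal g * (Wᴴ * A * Aᴴ) * W = Matrix.diagonal g * (Wᴴ * A * Aᴴ * W) := by
      simp only [Matrix.mul_assoc]
    rw [e3, hdiag, Matrix.diagonal_mul_diagonal, Matrix.trace_diagonal]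
    push_cast
    refine Finset.sum_congr rfl fun i _ => ?_
    by_cases h : lam i = 0
    · simp [hg, h, Real.sqrt_eq_zero', h.le]
    · have hpos : 0 < lam i := lt_of_le_of_ne (hlam0 i) (Ne.symm h)
      have hs : Real.sqrt (lam i) ≠ 0 := ne_of_gt (Real.sqrt_pos.mpr hpos)
      simp only [hg, if_neg h]
      have hr : (Real.sqrt (lam i))⁻¹ * lam i = Real.sqrt (lam i) := by
        rw [inv_mul_eq_iff_eq_mul₀ hs, Real.mul_self_sqrt (hlam0 i)]
      exact_mod_cast congrArg (Complex.ofReal) hr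
  have hKH : Kᴴ = W * Matrix.diagonal (star g) * Wᴴ * A := by
    rw [hK]
    simp only [Matrix.conjTranspose_mul, Matrix.diagonal_conjTranspose,
      Matrix.conjTranspose_conjTranspose, Matrix.mul_assoc]
  have hKK : Kᴴ * K = W * Matrix.diagonal (fun i => star (g i) * ((lam i : ℂ) * g i)) * Wᴴ := by
    have e1 : Kᴴ * K
        = W * (Matrix.diagonal (star g) * ((Wᴴ * A * Aᴴ * W) * (Matrix.diagonal g * Wᴴ))) := by
      rw [hKH, hK]; simp only [Matrix.mul_assoc]
    rw [e1, hdiag]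
    rw [← Matrix.mul_assoc (Matrix.diagonal (fun i => (lam i : ℂ))) _ _,
      Matrix.diagonal_mul_diagonal,
      ← Matrix.mul_assoc (Matrix.diagonal (star g)) _ _,
      Matrix.diagonal_mul_diagonal, ← Matrix.mul_assoc]
    simp only [Pi.star_apply]
  have hcval : ∀ i, star (g i) * ((lam i : ℂ) * g i) = if lam i = 0 then 0 else 1 := by
    intro i
    by_cases h : lam i = 0
    · simp [hg, h]
    · have hpos : 0 < lam i := lt_of_le_of_ne (hlam0 i) (Ne.symm h)
      have hs : Real.sqrt (lam i) ≠ 0 := ne_of_gt (Real.sqrt_pos.mpr hpos)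
      simp only [hg, if_neg h, RCLike.star_def, Complex.conj_ofReal]
      have hr : (Real.sqrt (lam i))⁻¹ * (lam i * (Real.sqrt (lam i))⁻¹) = 1 := by
        rw [inv_mul_eq_iff_eq_mul₀ hs, mul_one, mul_inv_eq_iff_eq_mul₀ hs,
          Real.mul_self_sqrt (hlam0 i)]
      exact_mod_cast congrArg (Complex.ofReal) hr
  have hsub : (1 : Matrix n n ℂ) - Kᴴ * K
      = W * Matrix.diagonal (fun i => 1 - (if lam i = 0 then 0 else 1 : ℂ)) * Wᴴ := by
    rw [hKK]
    simp only [hcval]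
    have hd : Matrix.diagonal (fun i => 1 - (if lam i = 0 then 0 else 1 : ℂ))
        = 1 - Matrix.diagonal (fun i => (if lam i = 0 then 0 else 1 : ℂ)) := by
      rw [← Matrix.diagonal_one, ← Matrix.diagonal_sub]
    rw [hd, Matrix.mul_sub, Matrix.mul_one, Matrix.sub_mul, hWW]
  have hc01 : ∀ i, (0 : ℂ) ≤ 1 - (if lam i = 0 then 0 else 1 : ℂ) := by
    intro i; by_cases h : lam i = 0 <;> simp [h]
  have hpsd : ((1 : Matrix n n ℂ) - Kᴴ * K).PosSemidef := by
    rw [hsub]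
    exact (Matrix.posSemidef_diagonal_iff.mpr hc01).mul_mul_conjTranspose_same W
  exact ⟨K, hpsd, by rw [htr, htrKA]⟩

end Z2Aux


open Z2Aux in
/-- **Z₂ order–disorder inequality**: `F(ρ, OρO†)² + |tr(ρU)|² ≤ 1` for a Hermitian unitary `U`
and a unitary `O` anticommuting with `U`. -/
theorem z2_order_disorder_inequality
    {n : Type*} [Fintype n] [DecidableEq n]
    (ρ : Matrix n n ℂ) (hρ : ρ.PosSemidef) (hρtr : ρ.trace = 1)
    (U : Matrix n n ℂ) (hU : U ∈ Matrix.unitaryGroup n ℂ) (hUherm : U = Uᴴ)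
    (O : Matrix n n ℂ) (hO : O ∈ Matrix.unitaryGroup n ℂ)
    (hanti : U * O * Uᴴ = -O) :
    fidelity ρ (O * ρ * Oᴴ) ^ 2 + ‖(ρ * U).trace‖ ^ 2 ≤ 1 := by
  classical
  have hOOH : O * Oᴴ = 1 := by
    have := Matrix.mem_unitaryGroup_iff.mp hO
    rwa [Matrix.star_eq_conjTranspose] at this
  have hOHO : Oᴴ * O = 1 := by
    have := Matrix.mem_unitaryGroup_iff'.mp hO
    rwa [Matrix.star_eq_conjTranspose] at this
  have hU2 : U * U = 1 := by
    have := Matrix.mem_unitaryGroup_iff.mp hU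
    rwa [Matrix.star_eq_conjTranspose, ← hUherm] at this
  have hUO : U * O = -(O * U) := by
    have h := congrArg (· * U) hanti
    rw [← hUherm] at h
    calc U * O = U * O * (U * U) := by rw [hU2, Matrix.mul_one]
      _ = U * O * U * U := by simp only [Matrix.mul_assoc]
      _ = -O * U := by rw [h]
      _ = -(O * U) := by rw [Matrix.neg_mul]
  set P : Matrix n n ℂ := (2⁻¹ : ℂ) • (1 + U) with hPdef
  set Q : Matrix n n ℂ := (2⁻¹ : ℂ) • (1 - U) with hQdef
  have hPQ : P + Q = 1 := by rw [hPdef, hQdef]; module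
  have hPmQ : P - Q = U := by rw [hPdef, hQdef]; module
  have hPherm : Pᴴ = P := by
    rw [hPdef, Matrix.conjTranspose_smul, Matrix.conjTranspose_add, Matrix.conjTranspose_one,
      ← hUherm]
    norm_num
  have hQherm : Qᴴ = Q := by
    rw [hQdef, Matrix.conjTranspose_smul, Matrix.conjTranspose_sub, Matrix.conjTranspose_one,
      ← hUherm]
    norm_num
  have hPP : P * P = P := by
    simp only [hPdef, Matrix.smul_mul, Matrix.mul_smul, Matrix.add_mul, Matrix.mul_add,
      Matrix.one_mul, Matrix.mul_one, hU2]
    module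
  have hQQ : Q * Q = Q := by
    simp only [hQdef, Matrix.smul_mul, Matrix.mul_smul, Matrix.sub_mul, Matrix.mul_sub,
      Matrix.one_mul, Matrix.mul_one, hU2]
    module
  have hPO : P * O = O * Q := by
    simp only [hPdef, hQdef, Matrix.smul_mul, Matrix.mul_smul, Matrix.add_mul, Matrix.mul_sub,
      Matrix.one_mul, Matrix.mul_one, hUO]
    module
  have hQO : Q * O = O * P := by
    simp only [hPdef, hQdef, Matrix.smul_mul, Matrix.mul_smul, Matrix.sub_mul, Matrix.mul_add,
      Matrix.one_mul, Matrix.mul_one, hUO]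
    module
  have hOHQ : Oᴴ * Q = P * Oᴴ := by
    have h := congrArg Matrix.conjTranspose hQO
    rwa [Matrix.conjTranspose_mul, Matrix.conjTranspose_mul, hQherm, hPherm] at h
  set X : Matrix n n ℂ := hρ.sqrt with hXdef
  have hXmat : matSqrt ρ = X := dif_pos hρ
  have hXherm : Xᴴ = X := hρ.posSemidef_sqrt.1
  have hXX : X * X = ρ := hρ.sqrt_mul_self
  set A : Matrix n n ℂ := X * O * X with hAdef
  have hmid : X * (O * ρ * Oᴴ) * X = A * Aᴴ := by
    rw [hAdef]
    simp only [Matrix.conjTranspose_mul, hXherm, ← hXX]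
    simp only [Matrix.mul_assoc]
  have hfid : fidelity ρ (O * ρ * Oᴴ) = (matSqrt (A * Aᴴ)).trace.re := by
    unfold fidelity
    rw [hXmat, hmid]
  set p : ℝ := (P * ρ).trace.re with hpdef
  set q : ℝ := (Q * ρ).trace.re with hqdef
  have hPρP : (P * ρ * P).PosSemidef := by
    have := hρ.mul_mul_conjTranspose_same P
    rwa [hPherm] at this
  have hQρQ : (Q * ρ * Q).PosSemidef := by
    have := hρ.mul_mul_conjTranspose_same Q
    rwa [hQherm] at this
  have htrP : (P * ρ * P).trace = (P * ρ).trace := by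
    rw [Matrix.trace_mul_cycle P ρ P, hPP]
  have htrQ : (Q * ρ * Q).trace = (Q * ρ).trace := by
    rw [Matrix.trace_mul_cycle Q ρ Q, hQQ]
  have hpc : (P * ρ).trace = (p : ℂ) := by
    rw [hpdef, ← htrP]
    exact psd_trace_ofReal hPρP
  have hqc : (Q * ρ).trace = (q : ℂ) := by
    rw [hqdef, ← htrQ]
    exact psd_trace_ofReal hQρQ
  have hp0 : 0 ≤ p := by
    have h := psd_trace_re_nonneg hPρP
    rw [htrP] at h
    exact h
  have hq0 : 0 ≤ q := by
    have h := psd_trace_re_nonneg hQρQ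
    rw [htrQ] at h
    exact h
  have hpq1 : p + q = 1 := by
    have h1 : (P * ρ).trace + (Q * ρ).trace = 1 := by
      rw [← Matrix.trace_add, ← Matrix.add_mul, hPQ, Matrix.one_mul, hρtr]
    rw [hpc, hqc] at h1
    exact_mod_cast h1
  have htrU : (ρ * U).trace = ((p - q : ℝ) : ℂ) := by
    rw [Matrix.trace_mul_comm, ← hPmQ, Matrix.sub_mul, Matrix.trace_sub, hpc, hqc]
    push_cast
    ring
  have hQQX : ∀ M : Matrix n n ℂ, Q * (Q * M) = Q * M := fun M => by
    rw [← Matrix.mul_assoc, hQQ]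
  have hsplit : A = (X * O * Q) * (Q * X) + (X * Q) * (Q * O * X) := by
    have e1 : (X * O * Q) * (Q * X) = X * (O * (Q * X)) := by
      simp only [Matrix.mul_assoc]
      rw [hQQX]
    have e2 : (X * Q) * (Q * O * X) = X * (O * (P * X)) := by
      simp only [Matrix.mul_assoc]
      rw [hQQX, ← Matrix.mul_assoc Q O X, hQO, Matrix.mul_assoc]
    rw [e1, e2, hAdef, ← Matrix.mul_add, ← Matrix.mul_add, ← Matrix.add_mul, add_comm Q P,
      hPQ, Matrix.one_mul]
    simp only [Matrix.mul_assoc]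
  have hXPX : (X * (P * X)).trace = (P * ρ).trace := by
    rw [Matrix.trace_mul_comm, Matrix.mul_assoc, hXX]
  have hXQX : (X * (Q * X)).trace = (Q * ρ).trace := by
    rw [Matrix.trace_mul_comm, Matrix.mul_assoc, hXX]
  have hB1 : ((X * O * Q) * (X * O * Q)ᴴ).trace = (P * ρ).trace := by
    have e : (X * O * Q) * (X * O * Q)ᴴ = X * (O * (Q * (Oᴴ * X))) := by
      simp only [Matrix.conjTranspose_mul, hXherm, hQherm, Matrix.mul_assoc, hQQX]
    have e2 : O * (Q * (Oᴴ * X)) = P * X := by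
      calc O * (Q * (Oᴴ * X)) = (O * Q) * (Oᴴ * X) := by rw [Matrix.mul_assoc]
        _ = (P * O) * (Oᴴ * X) := by rw [← hPO]
        _ = P * ((O * Oᴴ) * X) := by simp only [Matrix.mul_assoc]
        _ = P * X := by rw [hOOH, Matrix.one_mul]
    rw [e, e2, hXPX]
  have hC1 : ((Q * X)ᴴ * (Q * X)).trace = (Q * ρ).trace := by
    have e : (Q * X)ᴴ * (Q * X) = X * (Q * X) := by
      simp only [Matrix.conjTranspose_mul, hXherm, hQherm, Matrix.mul_assoc, hQQX]
    rw [e, hXQX]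
  have hB2 : ((X * Q) * (X * Q)ᴴ).trace = (Q * ρ).trace := by
    have e : (X * Q) * (X * Q)ᴴ = X * (Q * X) := by
      simp only [Matrix.conjTranspose_mul, hXherm, hQherm, Matrix.mul_assoc, hQQX]
    rw [e, hXQX]
  have hC2 : ((Q * O * X)ᴴ * (Q * O * X)).trace = (P * ρ).trace := by
    have e : (Q * O * X)ᴴ * (Q * O * X) = X * (Oᴴ * (Q * (O * X))) := by
      simp only [Matrix.conjTranspose_mul, hXherm, hQherm, Matrix.conjTranspose_conjTranspose,
        Matrix.mul_assoc, hQQX]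
    have e2 : Oᴴ * (Q * (O * X)) = P * X := by
      calc Oᴴ * (Q * (O * X)) = (Oᴴ * Q) * (O * X) := by rw [Matrix.mul_assoc]
        _ = (P * Oᴴ) * (O * X) := by rw [hOHQ]
        _ = P * ((Oᴴ * O) * X) := by simp only [Matrix.mul_assoc]
        _ = P * X := by rw [hOHO, Matrix.one_mul]
    rw [e, e2, hXPX]
  obtain ⟨K, hKpsd, hKtr⟩ := exists_contraction A
  have hFbound : fidelity ρ (O * ρ * Oᴴ)
      ≤ Real.sqrt p * Real.sqrt q + Real.sqrt q * Real.sqrt p := by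
    rw [hfid, hKtr]
    have hsplit' : (K * A).trace
        = (K * ((X * O * Q) * (Q * X))).trace + (K * ((X * Q) * (Q * O * X))).trace := by
      rw [hsplit, Matrix.mul_add, Matrix.trace_add]
    rw [hsplit', Complex.add_re]
    have h1 := key_bound K (X * O * Q) (Q * X) hKpsd
    have h2 := key_bound K (X * Q) (Q * O * X) hKpsd
    rw [hB1, hC1, hpc, hqc] at h1
    rw [hB2, hC2, hpc, hqc] at h2
    simp only [Complex.ofReal_re] at h1 h2
    linarith
  have hF0 : 0 ≤ fidelity ρ (O * ρ * Oᴴ) := by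
    rw [hfid]
    have hAA : (A * Aᴴ).PosSemidef := Matrix.posSemidef_self_mul_conjTranspose A
    rw [matSqrt, dif_pos hAA]
    exact psd_trace_re_nonneg hAA.posSemidef_sqrt
  rw [htrU, Complex.norm_real, Real.norm_eq_abs, sq_abs]
  have hs2 : (Real.sqrt p * Real.sqrt q) * (Real.sqrt p * Real.sqrt q) = p * q := by
    rw [mul_mul_mul_comm, Real.mul_self_sqrt hp0, Real.mul_self_sqrt hq0]
  nlinarith [hFbound, hF0, Real.sqrt_nonneg p, Real.sqrt_nonneg q, hpq1, hs2]
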